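/- A ring R is GCR if and only if for every simple left R-module M there exists r ∈ R acting on M as a nonzero finite rank operator over the division ring D = End_R(M); that is, r•M ≠ 0 and the D-submodule of M generated by the set r•M = {r•m : m ∈ M} is a finitely generated D-module. -/

import Mathlib

/-- A ring is (left) primitive if it admits a faithful simple left module. -/
def IsPrimitiveRing (R : Type u) [Ring R] : Prop :=
  ∃ (M : Type u) (_ : AddCommGroup M) (_ : Module R M), IsSimpleModule R M ∧ FaithfulSMul R M

/-- A ring has a minimal left ideal if there is an atom in its lattice of left ideals. -/
def HasMinimalLeftIdeal (R : Type u) [Ring R] : Prop :=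
  ∃ L : Submodule R R, IsAtom L

/-- A ring is GCR if every primitive quotient has a minimal left ideal. -/
def IsGCRRing (R : Type u) [Ring R] : Prop :=
  ∀ P : TwoSidedIdeal R, IsPrimitiveRing P.ringCon.Quotient →
    HasMinimalLeftIdeal P.ringCon.Quotient



universe u

open Module Submodule

section ForwardAux


variable (R : Type u) [Ring R] (M : Type u) [AddCommGroup M] [Module R M]

def actCon : RingCon R where
  r a b := ∀ m : M, a • m = b • m
  iseqv := ⟨fun _ _ => rfl, fun h m => (h m).symm, fun h h' m => (h m).trans (h' m)⟩
  add' h h' m := by rw [add_smul, add_smul, h, h']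
  mul' {a b c d} h h' m := by rw [mul_smul, mul_smul, h', h]

instance : SMul (actCon R M).Quotient M :=
  ⟨fun x m => Quotient.liftOn' x (fun r => r • m) (fun _ _ h => h m)⟩

instance : Module (actCon R M).Quotient M where
  one_smul m := one_smul R m
  mul_smul x y m := Quotient.inductionOn₂' x y fun a b => mul_smul a b m
  smul_zero x := Quotient.inductionOn' x fun a => smul_zero a
  smul_add x m n := Quotient.inductionOn' x fun a => smul_add a m n
  add_smul x y m := Quotient.inductionOn₂' x y fun a b => add_smul a b m
  zero_smul m := zero_smul R m

theorem actCon_faithful : FaithfulSMul (actCon R M).Quotient M :=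
  ⟨fun {x y} h => Quotient.inductionOn₂' x y
    (fun _ _ hab => Quotient.sound' fun m => hab m) h⟩

theorem actCon_isSimpleModule [hM : IsSimpleModule R M] :
    IsSimpleModule (actCon R M).Quotient M := by
  have key : ∀ p : Submodule (actCon R M).Quotient M, ∃ q : Submodule R M, (q : Set M) = p :=
    fun p => ⟨{ carrier := p
                add_mem' := p.add_mem
                zero_mem' := p.zero_mem
                smul_mem' := fun r m hm => p.smul_mem (r : (actCon R M).Quotient) hm }, rfl⟩
  have : Nontrivial M := IsSimpleModule.nontrivial R M
  refine { toIsSimpleOrder := ⟨fun p => ?_⟩ }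
  obtain ⟨q, hq⟩ := key p
  rcases eq_bot_or_eq_top q with h | h
  · exact Or.inl (SetLike.ext' (by rw [← hq, h]; rfl))
  · exact Or.inr (SetLike.ext' (by rw [← hq, h]; rfl))

/-- The linear map `L → M`, `x ↦ x • m`. -/
def actL {S : Type u} [Ring S] [Module S M] (L : Submodule S S) (m : M) : L →ₗ[S] M where
  toFun x := (x : S) • m
  map_add' x y := add_smul (x : S) (y : S) m
  map_smul' s x := mul_smul s (x : S) m

section Forward

variable {R} {M}

theorem forward_aux
    (hGCR : ∀ P : TwoSidedIdeal R,
      (∃ (N : Type u) (_ : AddCommGroup N) (_ : Module P.ringCon.Quotient N),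
        IsSimpleModule P.ringCon.Quotient N ∧ FaithfulSMul P.ringCon.Quotient N) →
      ∃ L : Submodule P.ringCon.Quotient P.ringCon.Quotient, IsAtom L)
    (hM : IsSimpleModule R M) :
    ∃ r : R, (∃ m : M, r • m ≠ 0) ∧
      (Submodule.span (Module.End R M) (Set.range fun m : M => r • m)).FG := by
  classical
  set c := actCon R M with hc
  obtain ⟨L, hL⟩ := hGCR ⟨c⟩
    ⟨M, inferInstance, inferInstance, actCon_isSimpleModule R M, actCon_faithful R M⟩
  haveI : IsSimpleModule c.Quotient M := actCon_isSimpleModule R M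
  haveI : IsSimpleModule c.Quotient L := isSimpleModule_iff_isAtom.2 hL
  obtain ⟨a, haL, ha0⟩ := Submodule.ne_bot_iff L |>.1 hL.1
  have hfaith := actCon_faithful R M
  -- a acts nontrivially
  have hact : ∃ m₁ : M, a • m₁ ≠ 0 := by
    by_contra hcon
    push_neg at hcon
    exact ha0 (hfaith.eq_of_smul_eq_smul (fun m => by rw [hcon m, zero_smul]))
  obtain ⟨m₁, hm₁⟩ := hact
  set ψ := actL M L m₁
  have hψ : ψ ≠ 0 := fun h => hm₁ (by simpa [ψ, actL] using congrFun (congrArg DFunLike.coe h) ⟨a, haL⟩)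
  have hbij := LinearMap.bijective_of_ne_zero hψ
  set e := LinearEquiv.ofBijective ψ hbij
  obtain ⟨r, hr⟩ := (fun x => Quotient.inductionOn' x fun r => ⟨r, rfl⟩ :
    ∀ x : c.Quotient, ∃ r : R, c.mk' r = x) a
  have hsmul : ∀ m : M, r • m = a • m := fun m => by rw [← hr]; rfl
  refine ⟨r, ⟨m₁, by rw [hsmul]; exact hm₁⟩, ?_⟩
  -- every r • m lies in the End-span of r • m₁
  set D := Module.End R M
  have hmem : ∀ m : M, r • m ∈ Submodule.span D {r • m₁} := by
    intro m
    set g : M →ₗ[c.Quotient] M := (actL M L m).comp e.symm.toLinearMap with hg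
    set d : D := { toFun := g
                   map_add' := g.map_add
                   map_smul' := fun rr x => g.map_smul ((rr : c.Quotient)) x } with hd
    refine Submodule.mem_span_singleton.2 ⟨d, ?_⟩
    have h1 : e.symm (a • m₁) = ⟨a, haL⟩ := by
      rw [LinearEquiv.symm_apply_eq]
      rfl
    show d (r • m₁) = r • m
    rw [hsmul m₁, hsmul m]
    show g (a • m₁) = a • m
    rw [hg, LinearMap.comp_apply]
    show (actL M L m) (e.symm (a • m₁)) = a • m
    rw [h1]
    rfl
  have hle : Submodule.span D (Set.range fun m : M => r • m) ≤ Submodule.span D {r • m₁} :=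
    Submodule.span_le.2 (by rintro _ ⟨m, rfl⟩; exact hmem m)
  haveI : FiniteDimensional D (Submodule.span D {r • m₁}) :=
    FiniteDimensional.span_singleton (K := D) (r • m₁)
  haveI := Submodule.finiteDimensional_of_le hle
  exact Module.Finite.iff_fg.1 ‹_›

end Forward


end ForwardAux

section BackwardAux


variable {R : Type u} [Ring R]

section SimpleAux

variable {N : Type u} [AddCommGroup N] [Module R N] [IsSimpleModule R N]

theorem exists_smul_eq_aux {x : N} (hx : x ≠ 0) (n : N) : ∃ t : R, t • x = n := by
  have hspan : Submodule.span R {x} = ⊤ := by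
    rcases eq_bot_or_eq_top (Submodule.span R {x}) with h | h
    · exact absurd (h ▸ Submodule.mem_span_singleton_self x) (by simpa using hx)
    · exact h
  exact Submodule.mem_span_singleton.1 (hspan ▸ Submodule.mem_top)

theorem mem_span_end_of_ann_le {x y : N} (hx : x ≠ 0)
    (h : ∀ s : R, s • x = 0 → s • y = 0) :
    y ∈ Submodule.span (Module.End R N) {x} := by
  set φ : R →ₗ[R] N := LinearMap.toSpanSingleton R N x
  have hsurj : Function.Surjective φ := by
    intro n
    obtain ⟨t, ht⟩ := exists_smul_eq_aux (R := R) hx n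
    exact ⟨t, ht⟩
  set φ' : R →ₗ[R] N := LinearMap.toSpanSingleton R N y
  have hle : LinearMap.ker φ ≤ LinearMap.ker φ' := fun s hs => h s hs
  set e := φ.quotKerEquivOfSurjective hsurj
  set g : N →ₗ[R] N := ((LinearMap.ker φ).liftQ φ' hle).comp e.symm.toLinearMap
  have he1 : e ((LinearMap.ker φ).mkQ 1) = x := by
    show φ 1 = x
    simp [φ, LinearMap.toSpanSingleton]
  have hsymm : e.symm x = (LinearMap.ker φ).mkQ 1 := by
    rw [LinearEquiv.symm_apply_eq, he1]
  have hg : g x = y := by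
    show ((LinearMap.ker φ).liftQ φ' hle) (e.symm x) = y
    rw [hsymm]
    show φ' 1 = y
    simp [φ', LinearMap.toSpanSingleton]
  exact Submodule.mem_span_singleton.2 ⟨g, hg⟩

end SimpleAux

theorem backward_aux
    (h : ∀ (M : Type u) [AddCommGroup M] [Module R M], IsSimpleModule R M →
        ∃ r : R, (∃ m : M, r • m ≠ 0) ∧
          (Submodule.span (Module.End R M) (Set.range fun m : M => r • m)).FG)
    (P : TwoSidedIdeal R)
    (hprim : ∃ (N : Type u) (_ : AddCommGroup N) (_ : Module P.ringCon.Quotient N),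
        IsSimpleModule P.ringCon.Quotient N ∧ FaithfulSMul P.ringCon.Quotient N) :
    ∃ L : Submodule P.ringCon.Quotient P.ringCon.Quotient, IsAtom L := by
  classical
  obtain ⟨N, _, _, hsimp, hfaith⟩ := hprim
  set S := P.ringCon.Quotient with hS
  set π := P.ringCon.mk' with hπ
  have hsurj : ∀ x : S, ∃ r : R, π r = x := fun x => Quotient.inductionOn' x fun r => ⟨r, rfl⟩
  letI : Module R N := Module.compHom N π
  have hsm : ∀ (r : R) (n : N), r • n = π r • n := fun r n => rfl
  haveI hsimpR : IsSimpleModule R N := by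
    have key : ∀ p : Submodule R N, ∃ q : Submodule S N, (q : Set N) = p := by
      intro p
      refine ⟨{ carrier := p
                add_mem' := p.add_mem
                zero_mem' := p.zero_mem
                smul_mem' := fun s n hn => ?_ }, rfl⟩
      obtain ⟨r, rfl⟩ := hsurj s
      exact p.smul_mem r hn
    have : Nontrivial N := IsSimpleModule.nontrivial S N
    refine { toIsSimpleOrder := ⟨fun p => ?_⟩ }
    obtain ⟨q, hq⟩ := key p
    rcases eq_bot_or_eq_top q with h | h
    · exact Or.inl (SetLike.ext' (by rw [← hq, h]; rfl))
    · exact Or.inr (SetLike.ext' (by rw [← hq, h]; rfl))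
  obtain ⟨r, hrne, hrfg⟩ := h N hsimpR
  set D := Module.End R N with hD
  -- minimal rank selection
  set Pred : ℕ → Prop := fun n => ∃ b : R, (∃ m : N, b • m ≠ 0) ∧
      (Submodule.span D (Set.range fun m : N => b • m)).FG ∧
      Module.finrank D (Submodule.span D (Set.range fun m : N => b • m)) = n with hPred
  have hex : ∃ n, Pred n := ⟨_, r, hrne, hrfg, rfl⟩
  obtain ⟨b, hbne, hbfg, hbrank⟩ := Nat.find_spec hex
  set k := Nat.find hex
  set W := Submodule.span D (Set.range fun m : N => b • m) with hW
  haveI : FiniteDimensional D W := Module.Finite.iff_fg.2 hbfg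
  obtain ⟨u, hu⟩ := hbne
  set x₀ := b • u with hx₀
  have hx₀W : x₀ ∈ W := Submodule.subset_span ⟨u, rfl⟩
  -- rank one property
  have hone : ∀ m : N, b • m ∈ Submodule.span D {x₀} := by
    by_contra hcon
    push_neg at hcon
    obtain ⟨v, hv⟩ := hcon
    have hann : ¬ (∀ s : R, s • x₀ = 0 → s • (b • v) = 0) := fun hh =>
      hv (mem_span_end_of_ann_le hu hh)
    push_neg at hann
    obtain ⟨s, hs1, hs2⟩ := hann
    -- the D-linear action of s
    set f : N →ₗ[D] N := { toFun := fun n => s • n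
                           map_add' := fun n n' => smul_add s n n'
                           map_smul' := fun d n => (d.map_smul s n).symm } with hf
    have hle : Submodule.span D (Set.range fun m : N => (s * b) • m) ≤ W.map f := by
      refine Submodule.span_le.2 ?_
      rintro _ ⟨m, rfl⟩
      exact ⟨b • m, Submodule.subset_span ⟨m, rfl⟩, (mul_smul s b m).symm⟩
    haveI : FiniteDimensional D (W.map f) := Module.Finite.map W f
    haveI : FiniteDimensional D (Submodule.span D (Set.range fun m : N => (s * b) • m)) :=
      Submodule.finiteDimensional_of_le hle
    -- kernel of f restricted to W is nontrivial
    have hker : (⟨x₀, hx₀W⟩ : W) ∈ LinearMap.ker (f.domRestrict W) := by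
      simp [f, hs1]
    have hkerne : LinearMap.ker (f.domRestrict W) ≠ ⊥ := by
      intro hh
      have : (⟨x₀, hx₀W⟩ : W) = 0 := by rw [hh] at hker; simpa using hker
      exact hu (by simpa [Subtype.ext_iff] using this)
    have hrn := LinearMap.finrank_range_add_finrank_ker (f.domRestrict W)
    rw [LinearMap.range_domRestrict] at hrn
    have hkerpos : 0 < Module.finrank D (LinearMap.ker (f.domRestrict W)) := by
      rcases Nat.eq_zero_or_pos (Module.finrank D (LinearMap.ker (f.domRestrict W))) with hz | hp
      · exact absurd (Submodule.finrank_eq_zero.1 hz) hkerne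
      · exact hp
    have hmaplt : Module.finrank D (W.map f) < k := by
      rw [hbrank] at hrn
      omega
    have hlt : Module.finrank D (Submodule.span D (Set.range fun m : N => (s * b) • m)) < k :=
      lt_of_le_of_lt (Submodule.finrank_mono hle) hmaplt
    exact Nat.find_min hex hlt
      ⟨s * b, ⟨v, by rw [mul_smul]; exact hs2⟩, Module.Finite.iff_fg.1 ‹_›, rfl⟩
  -- now π b generates a minimal left ideal
  have hπb : π b ≠ 0 := by
    intro hh
    exact hu (show x₀ = 0 by rw [hx₀, hsm b u, hh, zero_smul])
  refine ⟨Submodule.span S {π b}, ?_, ?_⟩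
  · intro hh
    have hmem := Submodule.mem_span_singleton_self (R := S) (π b)
    rw [hh] at hmem
    exact hπb (by simpa using hmem)
  · intro L' hlt
    by_contra hne
    obtain ⟨cc, hccL, hcc0⟩ := Submodule.ne_bot_iff L' |>.1 hne
    have hccmem : cc ∈ Submodule.span S {π b} := hlt.le hccL
    obtain ⟨sq, hsq⟩ := Submodule.mem_span_singleton.1 hccmem
    obtain ⟨t, rfl⟩ := hsurj sq
    have hcc : cc = π (t * b) := by rw [← hsq, map_mul]; rfl
    -- t * b acts nontrivially
    have htb : ∃ n : N, (t * b) • n ≠ 0 := by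
      by_contra hcon
      push_neg at hcon
      refine hcc0 (hfaith.eq_of_smul_eq_smul (fun n => ?_))
      rw [hcc, zero_smul, ← hsm (t * b) n, hcon n]
    obtain ⟨n₁, hn₁⟩ := htb
    obtain ⟨d₁, hd₁⟩ := Submodule.mem_span_singleton.1 (hone n₁)
    have htx₀ : t • x₀ ≠ 0 := by
      intro hh
      apply hn₁
      rw [mul_smul, ← hd₁]
      show t • (d₁ x₀) = 0
      rw [← d₁.map_smul t x₀, hh, map_zero]
    obtain ⟨t', ht'⟩ := exists_smul_eq_aux (R := R) htx₀ x₀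
    have hkey : ∀ m : N, (t' * (t * b)) • m = b • m := by
      intro m
      obtain ⟨d, hd⟩ := Submodule.mem_span_singleton.1 (hone m)
      have hbm : b • m = d x₀ := by rw [← hd]; rfl
      calc (t' * (t * b)) • m = t' • (t • (b • m)) := by rw [mul_smul, mul_smul]
        _ = t' • (t • (d x₀)) := by rw [hbm]
        _ = t' • (d (t • x₀)) := by rw [← d.map_smul t x₀]
        _ = d (t' • (t • x₀)) := by rw [← d.map_smul t' (t • x₀)]
        _ = d x₀ := by rw [ht']
        _ = b • m := hbm.symm
    have hπeq : π (t' * (t * b)) = π b :=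
      hfaith.eq_of_smul_eq_smul (fun n => by rw [← hsm _ n, ← hsm b n, hkey n])
    have hbmem : π b ∈ L' := by
      have hmem : π t' • cc ∈ L' := L'.smul_mem _ hccL
      rwa [smul_eq_mul, hcc, ← map_mul, hπeq] at hmem
    have hge : Submodule.span S {π b} ≤ L' := Submodule.span_le.2 (by simpa using hbmem)
    exact lt_irrefl _ (lt_of_lt_of_le hlt hge)


end BackwardAux

/-- A ring `R` is GCR if and only if for every simple left `R`-module `M` there exists
`r ∈ R` acting on `M` as a nonzero finite rank operator over the division ring
`D = End_R(M)`; i.e., `r • M ≠ 0` and the `D`-submodule of `M` generated by `r • M` is a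
finitely generated `D`-module. -/
theorem isGCRRing_iff_exists_finite_rank (R : Type u) [Ring R] :
    IsGCRRing R ↔
      ∀ (M : Type u) [AddCommGroup M] [Module R M], IsSimpleModule R M →
        ∃ r : R, (∃ m : M, r • m ≠ 0) ∧
          (Submodule.span (Module.End R M) (Set.range fun m : M => r • m)).FG := by
  constructor
  · intro hGCR M _ _ hM
    exact forward_aux (fun P hp => hGCR P hp) hM
  · intro h P hprim
    exact backward_aux h P hprim
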